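/- arXiv:1809.03424 — 2 statements merged into one kernel-verified Lean document; each statement's English description precedes it below -/
import Mathlib

section
/- Let p, q, r be integers and define V(n) = p⌊nφ⌋ + qn + r for n ≥ 1, and let A(n) = ⌊nφ⌋ and B(n) = ⌊nφ²⌋ = A(n) + n. Then for all n ≥ 1, V(A(n)) = (p+q)·⌊nφ⌋ + p·n + (r − p) and V(B(n)) = (2p+q)·⌊nφ⌋ + (p+q)·n + r. -/
noncomputable def phi : ℝ := (1 + Real.sqrt 5) / 2

lemma phi_sq : phi ^ 2 = phi + 1 := by
  have h : Real.sqrt 5 ^ 2 = 5 := Real.sq_sqrt (by norm_num)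
  unfold phi; nlinarith [h]

lemma phi_bounds : 1 < phi ∧ phi < 2 := by
  have h : Real.sqrt 5 ^ 2 = 5 := Real.sq_sqrt (by norm_num)
  have h0 : 0 ≤ Real.sqrt 5 := Real.sqrt_nonneg 5
  constructor <;> (unfold phi; nlinarith)

lemma phi_irr : Irrational phi := by
  have h5 : Irrational (Real.sqrt 5) := by
    simpa using Nat.Prime.irrational_sqrt (by norm_num : Nat.Prime 5)
  have : Irrational ((1 : ℚ) + Real.sqrt 5) := h5.ratCast_add 1
  simpa [phi, div_eq_mul_inv, mul_comm] using this.ratCast_mul (q := 1/2) (by norm_num)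

/-- If `V(m) = p⌊mφ⌋ + qm + r` for all `m ≥ 1`, `A(n) = ⌊nφ⌋` and `B(n) = ⌊nφ²⌋`, then
`V(A(n)) = (p+q)⌊nφ⌋ + pn + (r−p)` and `V(B(n)) = (2p+q)⌊nφ⌋ + (p+q)n + r` for `n ≥ 1`. -/
theorem gbs_compose_wythoff (p q r : ℤ) (V : ℤ → ℤ)
    (hV : ∀ m : ℤ, 1 ≤ m → V m = p * ⌊(m : ℝ) * phi⌋ + q * m + r)
    (n : ℕ) (hn : 1 ≤ n) :
    V ⌊(n : ℝ) * phi⌋ = (p + q) * ⌊(n : ℝ) * phi⌋ + p * (n : ℤ) + (r - p) ∧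
    V ⌊(n : ℝ) * phi ^ 2⌋ = (2 * p + q) * ⌊(n : ℝ) * phi⌋ + (p + q) * (n : ℤ) + r := by
  obtain ⟨h1, h2⟩ := phi_bounds
  have hsq := phi_sq
  set x : ℝ := (n : ℝ) * phi with hx
  have hnR : (1 : ℝ) ≤ (n : ℝ) := by exact_mod_cast hn
  have hirr : Irrational x := by
    have hn0 : (n : ℤ) ≠ 0 := by omega
    simpa [hx, mul_comm] using phi_irr.intCast_mul hn0
  set a : ℤ := ⌊x⌋ with ha
  have hfa : (a : ℝ) ≤ x := Int.floor_le x
  have hfl : x < a + 1 := Int.lt_floor_add_one x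
  have hne : x ≠ (a : ℝ) := by
    intro h; exact hirr ⟨a, h.symm⟩
  have hflt : (a : ℝ) < x := lt_of_le_of_ne hfa (fun h => hne h.symm)
  have ha1 : 1 ≤ a := by
    rw [ha, Int.le_floor]
    push_cast
    nlinarith
  -- floor of n * phi^2
  have hB : ⌊(n : ℝ) * phi ^ 2⌋ = a + n := by
    rw [hsq]
    have : (n : ℝ) * (phi + 1) = x + n := by rw [hx]; ring
    rw [this]
    rw [Int.floor_add_natCast, ← ha]
  -- floor of a * phi
  have hA : ⌊(a : ℝ) * phi⌋ = a + n - 1 := by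
    rw [Int.floor_eq_iff]
    constructor
    · push_cast
      nlinarith
    · push_cast
      nlinarith
  -- floor of (a+n) * phi
  have hAB : ⌊((a + n : ℤ) : ℝ) * phi⌋ = 2 * a + n := by
    rw [Int.floor_eq_iff]
    constructor
    · push_cast
      nlinarith
    · push_cast
      nlinarith
  constructor
  · rw [hV a ha1, hA]; ring
  · rw [hB, hV (a + n) (by omega), hAB]; ring
end

section
/- The three sets {2⌊nφ⌋ − n : n ≥ 1}, {4⌊nφ⌋ + 3n + 2 : n ≥ 0}, and {2⌊nφ⌋ − n + 2 : n ≥ 1} are pairwise disjoint and their union is the set of all positive integers; i.e., the sequences (2⌊nφ⌋ − n)_{n≥1}, (4⌊nφ⌋ + 3n + 2)_{n≥0}, and (2⌊nφ⌋ − n + 2)_{n≥1} form a complementary triple. -/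
lemma s_sq : Real.sqrt 5 ^ 2 = 5 := Real.sq_sqrt (by norm_num)
lemma s_gt : (2:ℝ) < Real.sqrt 5 := by nlinarith [s_sq, Real.sqrt_nonneg 5]
lemma s_lt : Real.sqrt 5 < 3 := by nlinarith [s_sq, Real.sqrt_nonneg 5]
lemma s_irr : Irrational (Real.sqrt 5) := by
  have := Nat.Prime.irrational_sqrt (p := 5) (by norm_num)
  simpa using this
lemma ns_ne (n z : ℤ) (hn : n ≠ 0) : (n:ℝ) * Real.sqrt 5 ≠ (z:ℝ) :=
  (s_irr.intCast_mul hn).ne_int z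
lemma int_lt (a b : ℤ) (h : (a:ℝ) * Real.sqrt 5 < (b:ℝ) * Real.sqrt 5) : a < b := by
  have := (mul_lt_mul_iff_left₀ (by linarith [s_gt] : (0:ℝ) < Real.sqrt 5)).mp h
  exact_mod_cast this
lemma floor_eq_of (m f : ℤ) (h1 : 2*(f:ℝ) < (m:ℝ)*(1+Real.sqrt 5))
    (h2 : (m:ℝ)*(1+Real.sqrt 5) < 2*(f:ℝ)+2) : ⌊(m:ℝ)*phi⌋ = f := by
  rw [Int.floor_eq_iff]
  constructor
  · rw [phi]; nlinarith
  · rw [phi]; nlinarith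
lemma floor_bounds (m : ℤ) (hm : m ≠ 0) :
    2*(⌊(m:ℝ)*phi⌋:ℝ) < (m:ℝ)*(1+Real.sqrt 5) ∧ (m:ℝ)*(1+Real.sqrt 5) < 2*⌊(m:ℝ)*phi⌋ + 2 := by
  have hirr : Irrational ((m:ℝ)*phi) := by
    rw [phi]
    have h1 : Irrational (1 + Real.sqrt 5) := by simpa using s_irr.intCast_add 1
    have h2 : Irrational ((1 + Real.sqrt 5)/2) := by
      simpa using h1.div_intCast (by norm_num : (2:ℤ) ≠ 0)
    exact h2.intCast_mul hm
  have hlt : (⌊(m:ℝ)*phi⌋:ℝ) < (m:ℝ)*phi :=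
    lt_of_le_of_ne (Int.floor_le _) (fun h => (hirr.ne_int _ h.symm))
  have hgt : (m:ℝ)*phi - 1 < ⌊(m:ℝ)*phi⌋ := Int.sub_one_lt_floor _
  simp only [phi] at hlt hgt ⊢
  constructor <;> nlinarith

lemma elimAC {z : ℤ} {c : ℤ} (h : ∃ n : ℕ, 1 ≤ n ∧ z = 2 * ⌊(n : ℝ) * phi⌋ - n + c) :
    ∃ m f : ℤ, 1 ≤ m ∧ z = 2*f - m + c ∧ 2*(f:ℝ) < (m:ℝ)*(1+Real.sqrt 5) ∧
      (m:ℝ)*(1+Real.sqrt 5) < 2*f+2 := by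
  obtain ⟨n, hn, hz⟩ := h
  have hcast : ((n:ℕ):ℝ) = (((n:ℤ)):ℝ) := by push_cast; ring
  refine ⟨(n:ℤ), ⌊((n:ℤ):ℝ)*phi⌋, by exact_mod_cast hn, ?_, ?_, ?_⟩
  · rw [hz, hcast]
  · exact (floor_bounds _ (Int.natCast_ne_zero.mpr (by omega))).1
  · exact (floor_bounds _ (Int.natCast_ne_zero.mpr (by omega))).2

lemma introAC (m f : ℤ) (hm : 1 ≤ m) (h1 : 2*(f:ℝ) < (m:ℝ)*(1+Real.sqrt 5))
    (h2 : (m:ℝ)*(1+Real.sqrt 5) < 2*(f:ℝ)+2) :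
    ∃ n : ℕ, 1 ≤ n ∧ 2*f - m = 2 * ⌊(n : ℝ) * phi⌋ - (n:ℤ) := by
  refine ⟨m.toNat, by omega, ?_⟩
  have hmn : ((m.toNat : ℕ) : ℤ) = m := Int.toNat_of_nonneg (by omega)
  have hreal : ((m.toNat : ℕ) : ℝ) = (m:ℝ) := by exact_mod_cast hmn
  rw [hreal, floor_eq_of m f h1 h2, hmn]

lemma introB (m f : ℤ) (hm : 0 ≤ m) (h1 : 2*(f:ℝ) < (m:ℝ)*(1+Real.sqrt 5))
    (h2 : (m:ℝ)*(1+Real.sqrt 5) < 2*(f:ℝ)+2) :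
    ∃ n : ℕ, 4*f + 3*m + 2 = 4 * ⌊(n : ℝ) * phi⌋ + 3*(n:ℤ) + 2 := by
  refine ⟨m.toNat, ?_⟩
  have hmn : ((m.toNat : ℕ) : ℤ) = m := Int.toNat_of_nonneg hm
  have hreal : ((m.toNat : ℕ) : ℝ) = (m:ℝ) := by exact_mod_cast hmn
  rw [hreal, floor_eq_of m f h1 h2, hmn]

lemma Bcase1 (m g : ℤ) (hB1 : 2*(g:ℝ) < (m:ℝ)*(1+Real.sqrt 5))
    (hc : (m:ℝ)*(1+Real.sqrt 5) < 2*(g:ℝ)+1) :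
    ((m:ℝ)+2*g)*Real.sqrt 5 + 2 < 4*(g:ℝ)+3*m+2 ∧
    (4*(g:ℝ)+3*m+2) < ((m:ℝ)+2*g+1)*Real.sqrt 5 := by
  have hms : (m:ℝ)*Real.sqrt 5^2 = 5*m := by rw [s_sq]; ring
  constructor
  · nlinarith [mul_pos (sub_pos.2 hB1) (sub_pos.2 s_gt), s_sq, hms]
  · nlinarith [mul_pos (sub_pos.2 hc) (sub_pos.2 s_gt), s_sq, hms]

lemma Bcase2 (m g : ℤ) (hc : 2*(g:ℝ)+1 < (m:ℝ)*(1+Real.sqrt 5))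
    (hB2 : (m:ℝ)*(1+Real.sqrt 5) < 2*(g:ℝ)+2) :
    ((m:ℝ)+2*g+1)*Real.sqrt 5 < 4*(g:ℝ)+3*m+2 ∧
    (4*(g:ℝ)+3*m+2) < ((m:ℝ)+2*g+2)*Real.sqrt 5 - 2 := by
  have hms : (m:ℝ)*Real.sqrt 5^2 = 5*m := by rw [s_sq]; ring
  constructor
  · nlinarith [mul_pos (sub_pos.2 hc) (sub_pos.2 s_gt), s_sq, hms]
  · nlinarith [mul_pos (sub_pos.2 hB2) (sub_pos.2 s_gt), s_sq, hms]

lemma Awin (n f : ℤ) (h1 : 2*(f:ℝ) < (n:ℝ)*(1+Real.sqrt 5))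
    (h2 : (n:ℝ)*(1+Real.sqrt 5) < 2*(f:ℝ)+2) :
    (n:ℝ)*Real.sqrt 5 - 2 < 2*(f:ℝ) - n ∧ 2*(f:ℝ) - n < (n:ℝ)*Real.sqrt 5 := by
  constructor <;> nlinarith

lemma disjAB_aux (n m f g : ℤ) (hm : 1 ≤ m)
    (hA1 : 2*(f:ℝ) < (n:ℝ)*(1+Real.sqrt 5)) (hA2 : (n:ℝ)*(1+Real.sqrt 5) < 2*(f:ℝ)+2)
    (hB1 : 2*(g:ℝ) < (m:ℝ)*(1+Real.sqrt 5)) (hB2 : (m:ℝ)*(1+Real.sqrt 5) < 2*(g:ℝ)+2)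
    (heq : 2*f - n = 4*g + 3*m + 2) : False := by
  have hAw := Awin n f hA1 hA2
  have heqR : 2*(f:ℝ) - n = 4*(g:ℝ)+3*m+2 := by exact_mod_cast congrArg (Int.cast : ℤ → ℝ) heq
  rcases lt_trichotomy ((m:ℝ)*(1+Real.sqrt 5)) (2*(g:ℝ)+1) with hc | hc | hc
  · have hB := Bcase1 m g hB1 hc
    have h1 : m + 2*g < n := by
      apply int_lt; push_cast; nlinarith [hB.1, hAw.2, heqR]
    have h2 : n < m + 2*g + 2 := by
      apply int_lt; push_cast
      have : (n:ℝ)*Real.sqrt 5 < ((m:ℝ)+2*g+1)*Real.sqrt 5 + 2 := by nlinarith [hB.2, hAw.1, heqR]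
      nlinarith [s_gt]
    have hn' : n = m + 2*g + 1 := by omega
    omega
  · exact ns_ne m (2*g+1-m) (by omega) (by push_cast; linarith)
  · have hB := Bcase2 m g hc hB2
    have h1 : m + 2*g + 1 < n := by
      apply int_lt; push_cast; nlinarith [hB.1, hAw.2, heqR]
    have h2 : n < m + 2*g + 2 := by
      apply int_lt; push_cast; nlinarith [hB.2, hAw.1, heqR]
    omega

lemma disjBC_aux (n m f g : ℤ) (hm : 1 ≤ m)
    (hC1 : 2*(f:ℝ) < (n:ℝ)*(1+Real.sqrt 5)) (hC2 : (n:ℝ)*(1+Real.sqrt 5) < 2*(f:ℝ)+2)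
    (hB1 : 2*(g:ℝ) < (m:ℝ)*(1+Real.sqrt 5)) (hB2 : (m:ℝ)*(1+Real.sqrt 5) < 2*(g:ℝ)+2)
    (heq : 4*g + 3*m + 2 = 2*f - n + 2) : False := by
  have hAw := Awin n f hC1 hC2
  have heqR : 4*(g:ℝ)+3*m+2 = 2*(f:ℝ) - n + 2 := by exact_mod_cast congrArg (Int.cast : ℤ → ℝ) heq
  rcases lt_trichotomy ((m:ℝ)*(1+Real.sqrt 5)) (2*(g:ℝ)+1) with hc | hc | hc
  · have hB := Bcase1 m g hB1 hc
    have h1 : m + 2*g < n := by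
      apply int_lt; push_cast; nlinarith [hB.1, hAw.2, heqR]
    have h2 : n < m + 2*g + 1 := by
      apply int_lt; push_cast; nlinarith [hB.2, hAw.1, heqR]
    omega
  · exact ns_ne m (2*g+1-m) (by omega) (by push_cast; linarith)
  · have hB := Bcase2 m g hc hB2
    have h1 : m + 2*g + 1 ≤ n := by
      by_contra hcon
      push_neg at hcon
      have hle : (n:ℝ) ≤ (m:ℝ) + 2*g := by exact_mod_cast (by omega : n ≤ m + 2*g)
      nlinarith [hB.1, hAw.1, heqR, s_gt,
        mul_le_mul_of_nonneg_right hle (by linarith [s_gt] : (0:ℝ) ≤ Real.sqrt 5)]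
    have h2 : n < m + 2*g + 2 := by
      apply int_lt; push_cast; nlinarith [hB.2, hAw.2, heqR]
    have hn' : n = m + 2*g + 1 := by omega
    omega

lemma disjAC_aux (n m f g : ℤ)
    (hA1 : 2*(f:ℝ) < (n:ℝ)*(1+Real.sqrt 5)) (hA2 : (n:ℝ)*(1+Real.sqrt 5) < 2*(f:ℝ)+2)
    (hC1 : 2*(g:ℝ) < (m:ℝ)*(1+Real.sqrt 5)) (hC2 : (m:ℝ)*(1+Real.sqrt 5) < 2*(g:ℝ)+2)
    (heq : 2*f - n = 2*g - m + 2) : False := by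
  have hAw := Awin n f hA1 hA2
  have hCw := Awin m g hC1 hC2
  have heqR : 2*(f:ℝ) - n = 2*(g:ℝ) - m + 2 := by exact_mod_cast congrArg (Int.cast : ℤ → ℝ) heq
  have h1 : m < n := by
    apply int_lt; nlinarith [hAw.2, hCw.1, heqR]
  have h2 : n < m + 2 := by
    apply int_lt; push_cast; nlinarith [hAw.1, hCw.2, heqR, s_gt]
  have : n = m + 1 := by omega
  omega

-- the covering lemma
lemma cover (z : ℤ) (hz : 0 < z) :
    (∃ m f : ℤ, 1 ≤ m ∧ z = 2*f - m ∧ 2*(f:ℝ) < (m:ℝ)*(1+Real.sqrt 5) ∧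
        (m:ℝ)*(1+Real.sqrt 5) < 2*(f:ℝ)+2) ∨
    (z = 2 ∨ ∃ m f : ℤ, 0 ≤ m ∧ z = 4*f + 3*m + 2 ∧ 2*(f:ℝ) < (m:ℝ)*(1+Real.sqrt 5) ∧
        (m:ℝ)*(1+Real.sqrt 5) < 2*(f:ℝ)+2) ∨
    (∃ m f : ℤ, 1 ≤ m ∧ z = 2*f - m + 2 ∧ 2*(f:ℝ) < (m:ℝ)*(1+Real.sqrt 5) ∧
        (m:ℝ)*(1+Real.sqrt 5) < 2*(f:ℝ)+2) := by
  have hs0 : (0:ℝ) < Real.sqrt 5 := by linarith [s_gt]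
  have h2s : (0:ℝ) < 2 + Real.sqrt 5 := by linarith
  have hzR : (0:ℝ) < (z:ℝ) := by exact_mod_cast hz
  set k : ℤ := ⌊(z:ℝ)*Real.sqrt 5/5⌋ with hk
  have hfl : (k:ℝ) ≤ (z:ℝ)*Real.sqrt 5/5 := Int.floor_le _
  have hfu : (z:ℝ)*Real.sqrt 5/5 < (k:ℝ) + 1 := Int.lt_floor_add_one _
  have hk0 : 0 ≤ k := Int.floor_nonneg.mpr (by positivity)
  have hks : (k:ℝ)*Real.sqrt 5^2 = 5*k := by rw [s_sq]; ring
  have hu : (z:ℝ) < ((k:ℝ)+1)*Real.sqrt 5 := by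
    nlinarith [mul_pos (sub_pos.2 hfu) hs0, s_sq, hks]
  have hl0 : (k:ℝ)*Real.sqrt 5 ≤ (z:ℝ) := by
    nlinarith [mul_le_mul_of_nonneg_right hfl (le_of_lt hs0), s_sq, hks]
  have hl : (k:ℝ)*Real.sqrt 5 < (z:ℝ) := by
    rcases eq_or_ne k 0 with h0 | h0
    · rw [h0]; push_cast; linarith
    · exact lt_of_le_of_ne hl0 (ns_ne k z h0)
  rcases Int.even_or_odd (z + (k+1)) with ⟨e, hee⟩ | ⟨e, hee⟩
  · -- even case
    have heeR : (z:ℝ) + (k:ℝ) + 1 = 2*(e:ℝ) := by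
      have h' : ((z:ℝ)) + ((k:ℝ)+1) = (e:ℝ) + (e:ℝ) := by exact_mod_cast hee
      linarith
    rcases lt_trichotomy (((k:ℝ)+1)*Real.sqrt 5) ((z:ℝ)+2) with hc | hc | hc
    · -- z ∈ A with m = k+1, f = e
      left
      refine ⟨k+1, e, by omega, by omega, ?_, ?_⟩
      · push_cast; nlinarith [hl, hu, heeR]
      · push_cast; nlinarith [hc, heeR]
    · exact absurd (by push_cast; linarith [hc] : ((k+1:ℤ):ℝ)*Real.sqrt 5 = ((z+2:ℤ):ℝ))
        (ns_ne (k+1) (z+2) (by omega))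
    · -- z ∈ B with m = z - 2k, f = 2k - e
      right; left; right
      have hb1 : 2*((2*k-e:ℤ):ℝ) < ((z-2*k:ℤ):ℝ)*(1+Real.sqrt 5) := by
        push_cast
        nlinarith [mul_pos (sub_pos.2 hl) h2s, mul_pos (sub_pos.2 hc) h2s, s_sq, hks, heeR]
      have hb2 : ((z-2*k:ℤ):ℝ)*(1+Real.sqrt 5) < 2*((2*k-e:ℤ):ℝ)+2 := by
        push_cast
        nlinarith [mul_pos (sub_pos.2 hl) h2s, mul_pos (sub_pos.2 hc) h2s, s_sq, hks, heeR]
      have hm0 : 0 ≤ z - 2*k := by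
        by_contra hcon
        push_neg at hcon
        have hmle : ((z-2*k:ℤ):ℝ) ≤ 0 := by exact_mod_cast le_of_lt hcon
        have : ((2*k-e:ℤ):ℝ) < 0 := by
          nlinarith [hb1, mul_nonpos_iff.mpr (Or.inr ⟨hmle, (by linarith : (0:ℝ) ≤ 1+Real.sqrt 5)⟩)]
        have : 2*k - e < 0 := by exact_mod_cast this
        omega
      exact ⟨z-2*k, 2*k-e, hm0, by omega, hb1, hb2⟩
  · -- odd case
    have heeR : (z:ℝ) + (k:ℝ) + 1 = 2*(e:ℝ) + 1 := by
      have h' : ((z:ℝ)) + ((k:ℝ)+1) = 2*(e:ℝ) + 1 := by exact_mod_cast hee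
      linarith
    rcases lt_trichotomy ((z:ℝ)) ((k:ℝ)*Real.sqrt 5 + 2) with hc | hc | hc
    · -- z ∈ C with m = k, f = e - 1
      right; right
      have hk1 : 1 ≤ k := by
        by_contra hcon
        push_neg at hcon
        have hk' : k = 0 := by omega
        have : (z:ℝ) < 2 := by rw [hk'] at hc; push_cast at hc; linarith
        have h2 : z < 2 := by exact_mod_cast this
        omega
      refine ⟨k, e-1, hk1, by omega, ?_, ?_⟩
      · push_cast; nlinarith [hl, heeR]
      · push_cast; nlinarith [hc, heeR]
    · -- boundary : z = 2
      right; left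
      rcases eq_or_ne k 0 with h0 | h0
      · left
        rw [h0] at hc; push_cast at hc
        have : (z:ℝ) = (2:ℤ) := by push_cast; linarith
        exact_mod_cast this
      · exact absurd (by push_cast; linarith [hc] : ((k:ℤ):ℝ)*Real.sqrt 5 = ((z-2:ℤ):ℝ))
          (ns_ne k (z-2) h0)
    · -- z ∈ B with m = z - 2k - 2, f = 2k - e + 1
      right; left; right
      have hb1 : 2*((2*k-e+1:ℤ):ℝ) < ((z-2*k-2:ℤ):ℝ)*(1+Real.sqrt 5) := by
        push_cast
        nlinarith [mul_pos (sub_pos.2 hc) h2s, mul_pos (sub_pos.2 hu) h2s, s_sq, hks, heeR]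
      have hb2 : ((z-2*k-2:ℤ):ℝ)*(1+Real.sqrt 5) < 2*((2*k-e+1:ℤ):ℝ)+2 := by
        push_cast
        nlinarith [mul_pos (sub_pos.2 hc) h2s, mul_pos (sub_pos.2 hu) h2s, s_sq, hks, heeR]
      have hm0 : 0 ≤ z - 2*k - 2 := by
        by_contra hcon
        push_neg at hcon
        have hmle : ((z-2*k-2:ℤ):ℝ) ≤ 0 := by exact_mod_cast le_of_lt hcon
        have : ((2*k-e+1:ℤ):ℝ) < 0 := by
          nlinarith [hb1, mul_nonpos_iff.mpr (Or.inr ⟨hmle, (by linarith : (0:ℝ) ≤ 1+Real.sqrt 5)⟩)]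
        have : 2*k - e + 1 < 0 := by exact_mod_cast this
        omega
      exact ⟨z-2*k-2, 2*k-e+1, hm0, by omega, hb1, hb2⟩

/-- The three sequences `(2⌊nφ⌋ − n)_{n≥1}`, `(4⌊nφ⌋ + 3n + 2)_{n≥0}` and
`(2⌊nφ⌋ − n + 2)_{n≥1}` form a complementary triple: their value sets are pairwise
disjoint and their union is the set of positive integers. -/
theorem nonclassical_triple :
    Disjoint {z : ℤ | ∃ n : ℕ, 1 ≤ n ∧ z = 2 * ⌊(n : ℝ) * phi⌋ - n}
      {z : ℤ | ∃ n : ℕ, z = 4 * ⌊(n : ℝ) * phi⌋ + 3 * n + 2} ∧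
    Disjoint {z : ℤ | ∃ n : ℕ, 1 ≤ n ∧ z = 2 * ⌊(n : ℝ) * phi⌋ - n}
      {z : ℤ | ∃ n : ℕ, 1 ≤ n ∧ z = 2 * ⌊(n : ℝ) * phi⌋ - n + 2} ∧
    Disjoint {z : ℤ | ∃ n : ℕ, z = 4 * ⌊(n : ℝ) * phi⌋ + 3 * n + 2}
      {z : ℤ | ∃ n : ℕ, 1 ≤ n ∧ z = 2 * ⌊(n : ℝ) * phi⌋ - n + 2} ∧
    {z : ℤ | ∃ n : ℕ, 1 ≤ n ∧ z = 2 * ⌊(n : ℝ) * phi⌋ - n} ∪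
      {z : ℤ | ∃ n : ℕ, z = 4 * ⌊(n : ℝ) * phi⌋ + 3 * n + 2} ∪
      {z : ℤ | ∃ n : ℕ, 1 ≤ n ∧ z = 2 * ⌊(n : ℝ) * phi⌋ - n + 2} = {z : ℤ | 0 < z} := by
  have hs0 : (0:ℝ) < Real.sqrt 5 := by linarith [s_gt]
  refine ⟨?_, ?_, ?_, ?_⟩
  · -- A vs B
    rw [Set.disjoint_left]
    rintro z hzA ⟨m, hzB⟩
    obtain ⟨n, f, hn, hzA', h1, h2⟩ := elimAC (z := z) (c := 0)
      (by obtain ⟨n, hn, hz⟩ := hzA; exact ⟨n, hn, by linarith⟩)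
    have hcm : ((m:ℕ):ℝ) = (((m:ℤ)):ℝ) := by push_cast; ring
    rw [hcm] at hzB
    rcases Nat.eq_zero_or_pos m with hm | hm
    · subst hm
      simp only [Int.natCast_zero, Int.cast_zero, zero_mul, Int.floor_zero, mul_zero] at hzB
      have hz2 : z = 2 := by omega
      have hzR : (2:ℝ) = 2*(f:ℝ) - n := by
        have : ((2:ℤ):ℝ) = ((2*f - n + 0 : ℤ):ℝ) := by exact_mod_cast (hz2 ▸ hzA')
        push_cast at this; linarith
      have hn2 : n < 2 := by
        by_contra hcon
        push_neg at hcon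
        have hcR : (2:ℝ) ≤ (n:ℝ) := by exact_mod_cast hcon
        nlinarith [mul_le_mul_of_nonneg_right hcR (le_of_lt hs0), s_gt, h1]
      have hn1 : n = 1 := by omega
      rw [hn1] at hzR
      push_cast at hzR
      have : (2:ℤ) = 2*f - 1 := by exact_mod_cast hzR
      omega
    · have hb := floor_bounds (m:ℤ) (Int.natCast_ne_zero.mpr (by omega))
      exact disjAB_aux n (m:ℤ) f ⌊((m:ℤ):ℝ)*phi⌋ (by exact_mod_cast hm) h1 h2 hb.1
        (by linarith [hb.2]) (by omega)
  · -- A vs C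
    rw [Set.disjoint_left]
    rintro z hzA hzC
    obtain ⟨n, f, hn, hzA', h1, h2⟩ := elimAC (z := z) (c := 0)
      (by obtain ⟨n', hn', hz'⟩ := hzA; exact ⟨n', hn', by linarith⟩)
    obtain ⟨m, g, hm, hzC', g1, g2⟩ := elimAC (z := z) (c := 2) hzC
    exact disjAC_aux n m f g h1 h2 g1 (by linarith [g2]) (by omega)
  · -- B vs C
    rw [Set.disjoint_left]
    rintro z ⟨m, hzB⟩ hzC
    obtain ⟨n, f, hn, hzC', h1, h2⟩ := elimAC (z := z) (c := 2) hzC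
    have hcm : ((m:ℕ):ℝ) = (((m:ℤ)):ℝ) := by push_cast; ring
    rw [hcm] at hzB
    rcases Nat.eq_zero_or_pos m with hm | hm
    · subst hm
      simp only [Int.natCast_zero, Int.cast_zero, zero_mul, Int.floor_zero, mul_zero] at hzB
      have hz2 : z = 2 := by omega
      have h0 : 2*f - n = 0 := by omega
      have hzR : 2*(f:ℝ) - n = 0 := by exact_mod_cast congrArg (Int.cast : ℤ → ℝ) h0
      have hn1 : (1:ℝ) ≤ (n:ℝ) := by exact_mod_cast hn
      nlinarith [mul_le_mul_of_nonneg_right hn1 (le_of_lt hs0), s_gt, h1]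
    · have hb := floor_bounds (m:ℤ) (Int.natCast_ne_zero.mpr (by omega))
      exact disjBC_aux n (m:ℤ) f ⌊((m:ℤ):ℝ)*phi⌋ (by exact_mod_cast hm) h1 h2 hb.1
        (by linarith [hb.2]) (by omega)
  · -- union
    ext z
    simp only [Set.mem_union, Set.mem_setOf_eq]
    constructor
    · rintro ((h | h) | h)
      · obtain ⟨n, f, hn, hz', h1, h2⟩ := elimAC (z := z) (c := 0)
          (by obtain ⟨n', hn', hzz⟩ := h; exact ⟨n', hn', by linarith⟩)
        have hn1 : (1:ℝ) ≤ (n:ℝ) := by exact_mod_cast hn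
        have : (0:ℝ) < 2*(f:ℝ) - n := by
          nlinarith [mul_le_mul_of_nonneg_right hn1 (le_of_lt hs0), s_gt, h2]
        have : 0 < 2*f - n := by exact_mod_cast this
        omega
      · obtain ⟨n, hz'⟩ := h
        have hg : 0 ≤ ⌊((n:ℕ):ℝ)*phi⌋ := Int.floor_nonneg.mpr (by
          have : (0:ℝ) ≤ phi := by rw [phi]; positivity
          positivity)
        have hn0 : (0:ℤ) ≤ (n:ℤ) := Int.natCast_nonneg n
        omega
      · obtain ⟨n, f, hn, hz', h1, h2⟩ := elimAC (z := z) (c := 2) h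
        have hn1 : (1:ℝ) ≤ (n:ℝ) := by exact_mod_cast hn
        have : (0:ℝ) < 2*(f:ℝ) - n := by
          nlinarith [mul_le_mul_of_nonneg_right hn1 (le_of_lt hs0), s_gt, h2]
        have : 0 < 2*f - n := by exact_mod_cast this
        omega
    · intro hz
      rcases cover z hz with ⟨m, f, hm, hz', h1, h2⟩ | (h2' | ⟨m, f, hm, hz', h1, h2⟩) |
        ⟨m, f, hm, hz', h1, h2⟩
      · left; left
        obtain ⟨n, hn, he⟩ := introAC m f hm h1 h2
        exact ⟨n, hn, by rw [hz', he]⟩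
      · left; right
        refine ⟨0, ?_⟩
        simp only [Nat.cast_zero, zero_mul, Int.floor_zero, mul_zero]
        omega
      · left; right
        obtain ⟨n, he⟩ := introB m f hm h1 h2
        exact ⟨n, by rw [hz']; exact he⟩
      · right
        obtain ⟨n, hn, he⟩ := introAC m f hm h1 h2
        exact ⟨n, hn, by rw [hz', he]⟩
end
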